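/- Let α, δ ∈ ℝ and define Ψ_{α,δ} : [0,∞) × ℝ → ℝ by Ψ_{α,δ}(t,x) = −(x − α − t/2 − t²)²/(1 + 4t) − δ + αt + t²/4 + t³/3. Then Ψ_{α,δ}(0,x) = −(x − α)² − δ for all x ∈ ℝ, and for every t > 0 and x ∈ ℝ, Ψ_{α,δ} is differentiable with ∂t Ψ_{α,δ}(t,x) = x + (∂x Ψ_{α,δ}(t,x))². -/

import Mathlib

/-- The translated explicit moving quadratic profile of Section 6.1 of the paper. -/
noncomputable def PsiAD (α δ t x : ℝ) : ℝ :=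
  -(x - α - t / 2 - t ^ 2) ^ 2 / (1 + 4 * t) - δ + α * t + t ^ 2 / 4 + t ^ 3 / 3

lemma hasDerivAt_t (α δ x t : ℝ) (ht : (1 + 4 * t) ≠ 0) :
    HasDerivAt (fun s => PsiAD α δ s x)
      ((-(2 * (x - α - t / 2 - t ^ 2)) * (-(1/2) - 2*t) * (1 + 4*t)
          - (-(x - α - t / 2 - t ^ 2) ^ 2) * 4) / (1 + 4*t) ^ 2
        + α + t / 2 + t ^ 2) t := by
  have hA : HasDerivAt (fun s : ℝ => -(x - α - s / 2 - s ^ 2) ^ 2)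
      (-(2 * (x - α - t / 2 - t ^ 2)) * (-(1/2) - 2*t)) t := by
    have h1 : HasDerivAt (fun s : ℝ => x - α - s / 2 - s ^ 2) (-(1/2) - 2*t) t := by
      have := ((hasDerivAt_id t).div_const 2).const_sub (x - α)
      have h2 := (hasDerivAt_pow 2 t)
      exact (this.sub h2).congr_deriv (by norm_num)
    have := (h1.pow 2).neg
    exact this.congr_deriv (by norm_num)
  have hB : HasDerivAt (fun s : ℝ => 1 + 4 * s) 4 t := by
    simpa using (hasDerivAt_id t).const_mul 4 |>.const_add 1
  have hdiv := hA.div hB ht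
  have hrest : HasDerivAt (fun s : ℝ => -δ + α * s + s ^ 2 / 4 + s ^ 3 / 3)
      (α + t / 2 + t ^ 2) t := by
    have h1 : HasDerivAt (fun s : ℝ => -δ + α * s) α t := by
      simpa using ((hasDerivAt_id t).const_mul α).const_add (-δ)
    have h2 : HasDerivAt (fun s : ℝ => s ^ 2 / 4) (t / 2) t := by
      have := (hasDerivAt_pow 2 t).div_const 4
      exact this.congr_deriv (by norm_num; ring)
    have h3 : HasDerivAt (fun s : ℝ => s ^ 3 / 3) (t ^ 2) t := by
      have := (hasDerivAt_pow 3 t).div_const 3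
      exact this.congr_deriv (by norm_num)
    exact ((h1.add h2).add h3)
  have h := hdiv.add hrest
  have hfun : (fun s => PsiAD α δ s x) =
      (fun s : ℝ => -(x - α - s / 2 - s ^ 2) ^ 2 / (1 + 4 * s)
        + (-δ + α * s + s ^ 2 / 4 + s ^ 3 / 3)) := by
    funext s; unfold PsiAD; ring
  rw [hfun]
  exact h.congr_deriv (by ring)

lemma hasDerivAt_x (α δ x t : ℝ) (ht : (1 + 4 * t) ≠ 0) :
    HasDerivAt (fun y => PsiAD α δ t y)
      (-(2 * (x - α - t / 2 - t ^ 2)) / (1 + 4 * t)) x := by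
  have h1 : HasDerivAt (fun y : ℝ => y - α - t / 2 - t ^ 2) 1 x := by
    simpa using (((hasDerivAt_id x).sub_const α).sub_const (t/2)).sub_const (t^2)
  have h2 : HasDerivAt (fun y : ℝ => -(y - α - t / 2 - t ^ 2) ^ 2)
      (-(2 * (x - α - t / 2 - t ^ 2))) x := by
    have := (h1.pow 2).neg
    exact this.congr_deriv (by norm_num)
  have h := (h2.div_const (1 + 4 * t)).add_const (-δ + α * t + t ^ 2 / 4 + t ^ 3 / 3)
  have hfun : (fun y => PsiAD α δ t y) =
      (fun y : ℝ => -(y - α - t / 2 - t ^ 2) ^ 2 / (1 + 4 * t)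
        + (-δ + α * t + t ^ 2 / 4 + t ^ 3 / 3)) := by
    funext y; unfold PsiAD; ring
  rw [hfun]
  exact h

/-- translated explicit solution in the analytical counterexample of
Section 6.1 of the paper: `Ψ_{α,δ}(t,x) = −(x − α − t/2 − t²)²/(1+4t) − δ + αt + t²/4 + t³/3`
satisfies `Ψ_{α,δ}(0,x) = −(x − α)² − δ` and solves `∂t Ψ = x + (∂x Ψ)²` for `t > 0`. -/
theorem explicit_translated_solution_psi (α δ : ℝ) :
    (∀ x : ℝ, PsiAD α δ 0 x = -(x - α) ^ 2 - δ) ∧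
    ∀ t > (0 : ℝ), ∀ x : ℝ,
      DifferentiableAt ℝ (fun s => PsiAD α δ s x) t ∧
      DifferentiableAt ℝ (fun y => PsiAD α δ t y) x ∧
      deriv (fun s => PsiAD α δ s x) t = x + (deriv (fun y => PsiAD α δ t y) x) ^ 2 := by
  constructor
  · intro x; unfold PsiAD; ring
  · intro t ht x
    have hB : (1 + 4 * t) ≠ 0 := by positivity
    have h1 := hasDerivAt_t α δ x t hB
    have h2 := hasDerivAt_x α δ x t hB
    refine ⟨h1.differentiableAt, h2.differentiableAt, ?_⟩
    rw [h1.deriv, h2.deriv]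
    field_simp
    ring
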